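/- Assume H1, H2 and λ ≥ ‖∇L^Π(X̄)‖_{σ,∞}. Then the estimator X̌ satisfies the oracle inequality D̄^Π(X̌‖X̄) ≤ inf_{X ∈ ℝ^{m₁×m₂}, ‖X‖_∞ ≤ γ} ( D̄^Π(X‖X̄) + 2λ‖X‖_{σ,1} ). -/

import Mathlib

open MeasureTheory ProbabilityTheory Matrix
open scoped InnerProductSpace

/-- Singular values of a rectangular real matrix: square roots of the
eigenvalues of `Xᵀ * X`. -/
noncomputable def singVals {m₁ m₂ : ℕ} (X : Matrix (Fin m₁) (Fin m₂) ℝ) : Fin m₂ → ℝ :=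
  fun i => Real.sqrt (((show (Xᵀ * X).IsHermitian by
    rw [← Matrix.conjTranspose_eq_transpose_of_trivial]
    exact Matrix.isHermitian_conjTranspose_mul_self X)).eigenvalues i)

/-- Nuclear (Schatten-1) norm `‖·‖_{σ,1}`. -/
noncomputable def nucNorm {m₁ m₂ : ℕ} (X : Matrix (Fin m₁) (Fin m₂) ℝ) : ℝ :=
  ∑ i, singVals X i

/-- Operator (Schatten-∞) norm `‖·‖_{σ,∞}`: the largest singular value. -/
noncomputable def opNorm {m₁ m₂ : ℕ} (X : Matrix (Fin m₁) (Fin m₂) ℝ) : ℝ :=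
  ⨆ i, singVals X i

/-- Frobenius (Schatten-2) norm `‖·‖_{σ,2}`. -/
noncomputable def frobNorm {m₁ m₂ : ℕ} (X : Matrix (Fin m₁) (Fin m₂) ℝ) : ℝ :=
  Real.sqrt (∑ k, ∑ l, (X k l) ^ 2)

/-- Entrywise sup norm `‖·‖_∞`. -/
noncomputable def linfNorm {m₁ m₂ : ℕ} (X : Matrix (Fin m₁) (Fin m₂) ℝ) : ℝ :=
  ⨆ p : Fin m₁ × Fin m₂, |X p.1 p.2|

/-- Bregman divergence of `G` (equal to the Kullback-Leibler divergence for
natural exponential families): `D_G(x‖x') = G x - G x' - G'(x')(x - x')`. -/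
noncomputable def breg (G G' : ℝ → ℝ) (x x' : ℝ) : ℝ :=
  G x - G x' - G' x' * (x - x')

/-- Integrated Bregman (Kullback-Leibler) divergence
`D̄^Π(X¹‖X²) = Σ_{k,l} π_{k,l} D_G(X¹_{k,l}‖X²_{k,l})`. -/
noncomputable def bregPi {m₁ m₂ : ℕ} (π : Fin m₁ × Fin m₂ → ℝ) (G G' : ℝ → ℝ)
    (X1 X2 : Matrix (Fin m₁) (Fin m₂) ℝ) : ℝ :=
  ∑ p : Fin m₁ × Fin m₂, π p * breg G G' (X1 p.1 p.2) (X2 p.1 p.2)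

/-- Known-sampling objective `L^Π(X) = G^Π(X) - (1/n) Σ_i X_{ω_i} Y_i`, where
`G^Π(X) = Σ_{k,l} π_{k,l} G(X_{k,l})`. -/
noncomputable def LPi {m₁ m₂ n : ℕ} (π : Fin m₁ × Fin m₂ → ℝ) (G : ℝ → ℝ)
    (idx : Fin n → Fin m₁ × Fin m₂) (Y : Fin n → ℝ)
    (X : Matrix (Fin m₁) (Fin m₂) ℝ) : ℝ :=
  (∑ p : Fin m₁ × Fin m₂, π p * G (X p.1 p.2)) -
    (n : ℝ)⁻¹ * ∑ i, X (idx i).1 (idx i).2 * Y i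

/-- Gradient of `L^Π` at `X̄`:
`∇L^Π(X̄) = ∇G^Π(X̄) - (1/n) Σ_i Y_i E_i = (1/n) Σ_i (Y_i E_i - E[Y_i E_i])` up to sign,
where `(∇G^Π(X̄))_{k,l} = π_{k,l} G'(X̄_{k,l})`. -/
noncomputable def gradLPi {m₁ m₂ n : ℕ} (π : Fin m₁ × Fin m₂ → ℝ) (G' : ℝ → ℝ)
    (idx : Fin n → Fin m₁ × Fin m₂) (Y : Fin n → ℝ)
    (Xb : Matrix (Fin m₁) (Fin m₂) ℝ) : Matrix (Fin m₁) (Fin m₂) ℝ :=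
  (Matrix.of fun k l => π (k, l) * G' (Xb k l)) -
    (n : ℝ)⁻¹ • ∑ i, Y i • Matrix.single (idx i).1 (idx i).2 (1 : ℝ)

noncomputable def toE {m : ℕ} (v : Fin m → ℝ) : EuclideanSpace ℝ (Fin m) :=
  (WithLp.equiv 2 _).symm v

lemma inner_toE {m : ℕ} (v w : Fin m → ℝ) : ⟪toE v, toE w⟫_ℝ = ∑ i, v i * w i := by
  simp [toE, PiLp.inner_apply, RCLike.inner_apply, conj_trivial]
  exact Finset.sum_congr rfl fun _ _ => mul_comm _ _

lemma toE_coe {m : ℕ} (x : EuclideanSpace ℝ (Fin m)) : toE ⇑x = x := rfl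

lemma dot_H {m₁ m₂ : ℕ} (B : Matrix (Fin m₁) (Fin m₂) ℝ) (v : Fin m₂ → ℝ) :
    v ⬝ᵥ ((Bᴴ * B) *ᵥ v) = ∑ k, ((B *ᵥ v) k) ^ 2 := by
  rw [conjTranspose_eq_transpose_of_trivial, ← Matrix.mulVec_mulVec,
    Matrix.dotProduct_mulVec, Matrix.vecMul_transpose]
  simp [dotProduct, pow_two]

lemma opNorm_nonneg {m₁ m₂ : ℕ} (X : Matrix (Fin m₁) (Fin m₂) ℝ) : 0 ≤ opNorm X :=
  Real.iSup_nonneg fun _ => Real.sqrt_nonneg _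

lemma nucNorm_nonneg {m₁ m₂ : ℕ} (X : Matrix (Fin m₁) (Fin m₂) ℝ) : 0 ≤ nucNorm X :=
  Finset.sum_nonneg fun _ _ => Real.sqrt_nonneg _

lemma singVals_le_opNorm {m₁ m₂ : ℕ} (X : Matrix (Fin m₁) (Fin m₂) ℝ) (j : Fin m₂) :
    singVals X j ≤ opNorm X :=
  le_ciSup (Set.Finite.bddAbove (Set.finite_range _)) j

-- basis vectors have unit Euclidean length, as plain sums
lemma basis_unit {m₁ m₂ : ℕ} (B : Matrix (Fin m₁) (Fin m₂) ℝ) (j : Fin m₂) :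
    ∑ l, ((Matrix.isHermitian_conjTranspose_mul_self B).eigenvectorBasis j) l ^ 2 = 1 := by
  have h := (Matrix.isHermitian_conjTranspose_mul_self B).eigenvectorBasis.orthonormal.1 j
  have h2 : ⟪(Matrix.isHermitian_conjTranspose_mul_self B).eigenvectorBasis j,
      (Matrix.isHermitian_conjTranspose_mul_self B).eigenvectorBasis j⟫_ℝ = 1 := by
    rw [real_inner_self_eq_norm_sq, h]; norm_num
  rw [← h2, ← toE_coe ((Matrix.isHermitian_conjTranspose_mul_self B).eigenvectorBasis j), inner_toE]
  simp [pow_two, toE, PiLp.toLp_apply]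

-- ‖B v_j‖² = eigenvalue j
lemma mulVec_basis_sq {m₁ m₂ : ℕ} (B : Matrix (Fin m₁) (Fin m₂) ℝ) (j : Fin m₂) :
    ∑ k, ((B *ᵥ ⇑((Matrix.isHermitian_conjTranspose_mul_self B).eigenvectorBasis j)) k) ^ 2
      = (Matrix.isHermitian_conjTranspose_mul_self B).eigenvalues j := by
  rw [← dot_H, (Matrix.isHermitian_conjTranspose_mul_self B).mulVec_eigenvectorBasis]
  rw [dotProduct_smul]
  have : ⇑((Matrix.isHermitian_conjTranspose_mul_self B).eigenvectorBasis j) ⬝ᵥ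
      ⇑((Matrix.isHermitian_conjTranspose_mul_self B).eigenvectorBasis j) = 1 := by
    have := basis_unit B j
    simpa [dotProduct, pow_two] using this
  rw [this]; simp

lemma rayleigh {m₁ m₂ : ℕ} (A : Matrix (Fin m₁) (Fin m₂) ℝ) (v : Fin m₂ → ℝ)
    (hv : ∑ l, v l ^ 2 = 1) : ∑ k, ((A *ᵥ v) k) ^ 2 ≤ opNorm A ^ 2 := by
  have hH := Matrix.isHermitian_conjTranspose_mul_self A
  set b := hH.eigenvectorBasis with hbdef
  have hsym : (Aᴴ * A)ᵀ = Aᴴ * A := by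
    rw [conjTranspose_eq_transpose_of_trivial, transpose_mul, transpose_transpose]
  have key : ∀ j, ⟪b j, toE ((Aᴴ * A) *ᵥ v)⟫_ℝ
      = hH.eigenvalues j * ⟪toE v, b j⟫_ℝ := by
    intro j
    rw [← toE_coe (b j), inner_toE]
    have h2 : ⇑(b j) ᵥ* (Aᴴ * A) = (Aᴴ * A) *ᵥ ⇑(b j) := by
      conv_lhs => rw [← hsym]
      rw [Matrix.vecMul_transpose]
    calc ∑ l, (b j) l * ((Aᴴ * A) *ᵥ v) l = ⇑(b j) ⬝ᵥ ((Aᴴ * A) *ᵥ v) := rfl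
      _ = (⇑(b j) ᵥ* (Aᴴ * A)) ⬝ᵥ v := by rw [Matrix.dotProduct_mulVec]
      _ = ((Aᴴ * A) *ᵥ ⇑(b j)) ⬝ᵥ v := by rw [h2]
      _ = (hH.eigenvalues j • ⇑(b j)) ⬝ᵥ v := by rw [hH.mulVec_eigenvectorBasis]
      _ = hH.eigenvalues j * (⇑(b j) ⬝ᵥ v) := smul_dotProduct _ _ _
      _ = hH.eigenvalues j * ⟪toE v, b j⟫_ℝ := by
          rw [← toE_coe (b j), inner_toE]
          congr 1
          simp [toE, PiLp.toLp_apply, dotProduct, mul_comm]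
  have main : ∑ k, ((A *ᵥ v) k) ^ 2 = ∑ j, hH.eigenvalues j * ⟪toE v, b j⟫_ℝ ^ 2 := by
    rw [← dot_H]
    have h3 : v ⬝ᵥ ((Aᴴ * A) *ᵥ v) = ⟪toE v, toE ((Aᴴ * A) *ᵥ v)⟫_ℝ := (inner_toE _ _).symm
    rw [h3, ← b.sum_inner_mul_inner (toE v) (toE ((Aᴴ * A) *ᵥ v))]
    exact Finset.sum_congr rfl fun j _ => by rw [key j]; ring
  have hsum : ∑ j, ⟪toE v, b j⟫_ℝ ^ 2 = 1 := by
    have h4 := b.sum_inner_mul_inner (toE v) (toE v)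
    rw [inner_toE] at h4
    calc ∑ j, ⟪toE v, b j⟫_ℝ ^ 2 = ∑ j, ⟪toE v, b j⟫_ℝ * ⟪b j, toE v⟫_ℝ :=
          Finset.sum_congr rfl fun j _ => by rw [real_inner_comm (b j) (toE v)]; ring
      _ = ∑ i, v i * v i := h4
      _ = 1 := by simpa [pow_two] using hv
  have heig : ∀ j, hH.eigenvalues j ≤ opNorm A ^ 2 := by
    intro j
    have h0 : 0 ≤ hH.eigenvalues j := Matrix.eigenvalues_conjTranspose_mul_self_nonneg A j
    have h5 : hH.eigenvalues j = singVals A j ^ 2 := by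
      rw [singVals]; exact (Real.sq_sqrt h0).symm
    rw [h5]
    exact pow_le_pow_left₀ (Real.sqrt_nonneg _) (singVals_le_opNorm A j) 2
  rw [main]
  calc ∑ j, hH.eigenvalues j * ⟪toE v, b j⟫_ℝ ^ 2
      ≤ ∑ j, opNorm A ^ 2 * ⟪toE v, b j⟫_ℝ ^ 2 :=
        Finset.sum_le_sum fun j _ => mul_le_mul_of_nonneg_right (heig j) (sq_nonneg _)
    _ = opNorm A ^ 2 := by rw [← Finset.mul_sum, hsum, mul_one]

lemma trace_duality {m₁ m₂ : ℕ} (A B : Matrix (Fin m₁) (Fin m₂) ℝ) :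
    |∑ p : Fin m₁ × Fin m₂, A p.1 p.2 * B p.1 p.2| ≤ opNorm A * nucNorm B := by
  have hH := Matrix.isHermitian_conjTranspose_mul_self B
  set b := hH.eigenvectorBasis with hbdef
  have expand : ∑ p : Fin m₁ × Fin m₂, A p.1 p.2 * B p.1 p.2
      = ∑ j, ∑ k, (A *ᵥ ⇑(b j)) k * (B *ᵥ ⇑(b j)) k := by
    rw [Fintype.sum_prod_type]
    rw [show (∑ k, ∑ l, A k l * B k l) = ∑ k, ∑ j, (A *ᵥ ⇑(b j)) k * (B *ᵥ ⇑(b j)) k from ?_,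
      Finset.sum_comm]
    apply Finset.sum_congr rfl; intro k _
    have h1 : ∑ l, A k l * B k l = ⟪toE (A k), toE (B k)⟫_ℝ := (inner_toE _ _).symm
    rw [h1, ← b.sum_inner_mul_inner (toE (A k)) (toE (B k))]
    apply Finset.sum_congr rfl; intro j _
    have h2 : ⟪toE (A k), b j⟫_ℝ = (A *ᵥ ⇑(b j)) k := by
      rw [← toE_coe (b j), inner_toE]; rfl
    have h3 : ⟪b j, toE (B k)⟫_ℝ = (B *ᵥ ⇑(b j)) k := by
      rw [← toE_coe (b j), inner_toE]
      simp [toE, PiLp.toLp_apply, Matrix.mulVec, dotProduct, mul_comm]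
    rw [h2, h3]
  rw [expand]
  refine (Finset.abs_sum_le_sum_abs _ _).trans ?_
  have hle : ∀ j, |∑ k, (A *ᵥ ⇑(b j)) k * (B *ᵥ ⇑(b j)) k| ≤ opNorm A * singVals B j := by
    intro j
    have hunit : ∑ l, (b j) l ^ 2 = 1 := basis_unit B j
    have hcs : (∑ k, (A *ᵥ ⇑(b j)) k * (B *ᵥ ⇑(b j)) k) ^ 2
        ≤ (∑ k, ((A *ᵥ ⇑(b j)) k) ^ 2) * ∑ k, ((B *ᵥ ⇑(b j)) k) ^ 2 :=
      Finset.sum_mul_sq_le_sq_mul_sq _ _ _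
    have habs : |∑ k, (A *ᵥ ⇑(b j)) k * (B *ᵥ ⇑(b j)) k|
        ≤ Real.sqrt ((∑ k, ((A *ᵥ ⇑(b j)) k) ^ 2) * ∑ k, ((B *ᵥ ⇑(b j)) k) ^ 2) := by
      rw [← Real.sqrt_sq_eq_abs]
      exact Real.sqrt_le_sqrt hcs
    refine habs.trans ?_
    rw [Real.sqrt_mul (Finset.sum_nonneg fun _ _ => sq_nonneg _)]
    have hA : Real.sqrt (∑ k, ((A *ᵥ ⇑(b j)) k) ^ 2) ≤ opNorm A := by
      have := Real.sqrt_le_sqrt (rayleigh A ⇑(b j) hunit)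
      rwa [Real.sqrt_sq (opNorm_nonneg A)] at this
    have hB : Real.sqrt (∑ k, ((B *ᵥ ⇑(b j)) k) ^ 2) = singVals B j := by
      rw [mulVec_basis_sq B j]; rfl
    rw [hB]
    exact mul_le_mul_of_nonneg_right hA (Real.sqrt_nonneg _)
  refine (Finset.sum_le_sum fun j _ => hle j).trans ?_
  rw [← Finset.mul_sum]; rfl

lemma sum_std {m₁ m₂ n : ℕ} (idx : Fin n → Fin m₁ × Fin m₂) (Y : Fin n → ℝ)
    (M : Matrix (Fin m₁) (Fin m₂) ℝ) :
    ∑ p : Fin m₁ × Fin m₂,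
        (∑ i, Y i • Matrix.single (idx i).1 (idx i).2 (1 : ℝ)) p.1 p.2 * M p.1 p.2
      = ∑ i, Y i * M (idx i).1 (idx i).2 := by
  have hstd : ∀ i, ∑ p : Fin m₁ × Fin m₂,
      (Matrix.single (idx i).1 (idx i).2 (1 : ℝ)) p.1 p.2 * M p.1 p.2
        = M (idx i).1 (idx i).2 := by
    intro i
    rw [Finset.sum_eq_single ((idx i).1, (idx i).2)]
    · simp [Matrix.single]
    · intro p _ hp
      have : ¬((idx i).1 = p.1 ∧ (idx i).2 = p.2) := by
        rintro ⟨h1, h2⟩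
        exact hp (Prod.ext h1.symm h2.symm)
      simp [Matrix.single, Matrix.of_apply, this]
    · intro h; exact absurd (Finset.mem_univ _) h
  calc ∑ p : Fin m₁ × Fin m₂,
        (∑ i, Y i • Matrix.single (idx i).1 (idx i).2 (1 : ℝ)) p.1 p.2 * M p.1 p.2
      = ∑ p : Fin m₁ × Fin m₂, ∑ i, Y i *
          ((Matrix.single (idx i).1 (idx i).2 (1 : ℝ)) p.1 p.2 * M p.1 p.2) := by
        apply Finset.sum_congr rfl; intro p _
        rw [Matrix.sum_apply, Finset.sum_mul]
        apply Finset.sum_congr rfl; intro i _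
        simp [mul_assoc]
    _ = ∑ i, Y i * M (idx i).1 (idx i).2 := by
        rw [Finset.sum_comm]
        apply Finset.sum_congr rfl; intro i _
        rw [← Finset.mul_sum, hstd i]

lemma bregPi_expand {m₁ m₂ : ℕ} (π : Fin m₁ × Fin m₂ → ℝ) (G G' : ℝ → ℝ)
    (M Xb : Matrix (Fin m₁) (Fin m₂) ℝ) :
    bregPi π G G' M Xb = (∑ p : Fin m₁ × Fin m₂, π p * G (M p.1 p.2))
      - (∑ p : Fin m₁ × Fin m₂, π p * G (Xb p.1 p.2))
      - (∑ p : Fin m₁ × Fin m₂, π p * G' (Xb p.1 p.2) * M p.1 p.2)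
      + ∑ p : Fin m₁ × Fin m₂, π p * G' (Xb p.1 p.2) * Xb p.1 p.2 := by
  simp only [bregPi, breg]
  rw [← Finset.sum_sub_distrib, ← Finset.sum_sub_distrib, ← Finset.sum_add_distrib]
  exact Finset.sum_congr rfl fun p _ => by ring

theorem oracle_ineq_KL (m₁ m₂ n : ℕ) (γ lam μ σlow σup : ℝ)
    (G G' G'' : ℝ → ℝ) (π : Fin m₁ × Fin m₂ → ℝ)
    (idx : Fin n → Fin m₁ × Fin m₂) (Y : Fin n → ℝ)
    (Xb Xc : Matrix (Fin m₁) (Fin m₂) ℝ)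
    (hγ : 0 < γ)
    -- Assumption H1
    (hG' : ∀ x ∈ Set.Icc (-γ) γ, HasDerivAt G (G' x) x)
    (hG'' : ∀ x ∈ Set.Icc (-γ) γ, HasDerivAt G' (G'' x) x)
    (hσlow : 0 < σlow) (hσord : σlow ≤ σup)
    (hcurv : ∀ x ∈ Set.Icc (-γ) γ, σlow ^ 2 ≤ G'' x ∧ G'' x ≤ σup ^ 2)
    -- Assumption H2 (Π is a sampling distribution bounded below)
    (hμ : 1 ≤ μ) (hπ0 : ∀ p, 0 ≤ π p) (hπsum : ∑ p, π p = 1)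
    (hπ : ∀ p : Fin m₁ × Fin m₂, 1 / (μ * m₁ * m₂) ≤ π p)
    -- λ dominates the operator norm of the gradient of L^Π at X̄
    (hlam : opNorm (gradLPi π G' idx Y Xb) ≤ lam)
    -- X̌ minimizes X ↦ L^Π(X) + λ‖X‖_{σ,1} over {‖X‖_∞ ≤ γ}
    (hXc : linfNorm Xc ≤ γ)
    (hmin : ∀ X : Matrix (Fin m₁) (Fin m₂) ℝ, linfNorm X ≤ γ →
      LPi π G idx Y Xc + lam * nucNorm Xc ≤ LPi π G idx Y X + lam * nucNorm X) :
    ∀ X : Matrix (Fin m₁) (Fin m₂) ℝ, linfNorm X ≤ γ →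
      bregPi π G G' Xc Xb ≤ bregPi π G G' X Xb + 2 * lam * nucNorm X := by
  intro X hX
  set Gm := gradLPi π G' idx Y Xb with hGm
  have dXc : |∑ p : Fin m₁ × Fin m₂, Gm p.1 p.2 * Xc p.1 p.2| ≤ lam * nucNorm Xc :=
    (trace_duality Gm Xc).trans (mul_le_mul_of_nonneg_right hlam (nucNorm_nonneg Xc))
  have dX : |∑ p : Fin m₁ × Fin m₂, Gm p.1 p.2 * X p.1 p.2| ≤ lam * nucNorm X :=
    (trace_duality Gm X).trans (mul_le_mul_of_nonneg_right hlam (nucNorm_nonneg X))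
  have hGmApply : ∀ p : Fin m₁ × Fin m₂, Gm p.1 p.2
      = π p * G' (Xb p.1 p.2) - (n : ℝ)⁻¹ *
        (∑ i, Y i • Matrix.single (idx i).1 (idx i).2 (1 : ℝ)) p.1 p.2 := by
    intro p
    simp [hGm, gradLPi, Matrix.sub_apply, Matrix.smul_apply, smul_eq_mul]
  have hip : ∀ M : Matrix (Fin m₁) (Fin m₂) ℝ,
      ∑ p : Fin m₁ × Fin m₂, Gm p.1 p.2 * M p.1 p.2
        = (∑ p : Fin m₁ × Fin m₂, π p * G' (Xb p.1 p.2) * M p.1 p.2)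
          - (n : ℝ)⁻¹ * ∑ i, Y i * M (idx i).1 (idx i).2 := by
    intro M
    calc ∑ p : Fin m₁ × Fin m₂, Gm p.1 p.2 * M p.1 p.2
        = ∑ p : Fin m₁ × Fin m₂, (π p * G' (Xb p.1 p.2) * M p.1 p.2
            - (n : ℝ)⁻¹ * ((∑ i, Y i • Matrix.single (idx i).1 (idx i).2 (1 : ℝ))
                p.1 p.2 * M p.1 p.2)) := by
          apply Finset.sum_congr rfl; intro p _
          rw [hGmApply p]; ring
      _ = _ := by
          rw [Finset.sum_sub_distrib, ← Finset.mul_sum, sum_std]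
  have hLPi : ∀ M : Matrix (Fin m₁) (Fin m₂) ℝ,
      LPi π G idx Y M = (∑ p : Fin m₁ × Fin m₂, π p * G (M p.1 p.2))
        - (n : ℝ)⁻¹ * ∑ i, Y i * M (idx i).1 (idx i).2 := by
    intro M
    rw [LPi]
    congr 1
    congr 1
    exact Finset.sum_congr rfl fun i _ => mul_comm _ _
  have key := hmin X hX
  have hBc := bregPi_expand π G G' Xc Xb
  have hBx := bregPi_expand π G G' X Xb
  have hipc := hip Xc
  have hipx := hip X
  have hLc := hLPi Xc
  have hLx := hLPi X
  rw [hLc, hLx] at key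
  obtain ⟨dXc1, dXc2⟩ := abs_le.mp dXc
  obtain ⟨dX1, dX2⟩ := abs_le.mp dX
  linarith
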